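/- Let ν be a multiplicative arithmetic function whose support has positive asymptotic density. Set C'_ν = (6/π²)·∏_{p ∉ supp(ν)} (1 + 1/p)^{-1} (a positive real since ∑_{p∉supp(ν)} 1/p < ∞). Then for every pair (f, g) of multiplicative arithmetic functions with g = f * ν, one has d(supp(g)) ≥ C'_ν / (∑_{n ∈ supp(f)} 1/n), with the convention C'_ν/∞ = 0. -/

import Mathlib

open Filter Topology ArithmeticFunction

/-- Number of elements of `A` in `[1, N]`. -/
noncomputable def cnt (A : Set ℕ) (N : ℕ) : ℕ := (A ∩ Set.Icc 1 N).ncard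

/-- `A ⊆ ℕ` has asymptotic density `d`. -/
def HasDensity (A : Set ℕ) (d : ℝ) : Prop :=
  Filter.Tendsto (fun N : ℕ => (cnt A N : ℝ) / N) Filter.atTop (nhds d)

/-- `A` is thin: the sum of the reciprocals of its elements converges. -/
def Thin (A : Set ℕ) : Prop := Summable (fun a : A => (1 : ℝ) / a)

open Finset

section Counting

lemma card_multiples (d k : ℕ) (hd : 0 < d) :
    #((range (d * k)).filter (d ∣ ·)) = k := by
  have : #((range (d * k)).filter (d ∣ ·)) = #(range k) := by
    apply Finset.card_bij' (fun n _ => n / d) (fun t _ => t * d)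
    · intro n hn
      simp only [mem_filter, mem_range] at hn ⊢
      exact Nat.div_lt_of_lt_mul hn.1
    · intro t ht
      simp only [mem_range] at ht
      simp only [mem_filter, mem_range]
      refine ⟨?_, ⟨t, mul_comm t d⟩⟩
      calc t * d < k * d := by exact Nat.mul_lt_mul_of_lt_of_le ht le_rfl hd
        _ = d * k := mul_comm _ _
    · intro n hn
      simp only [mem_filter] at hn
      exact Nat.div_mul_cancel hn.2
    · intro t _
      exact Nat.mul_div_cancel t hd
  simpa using this

lemma card_non_multiples (d m : ℕ) (hd : 0 < d) (hdm : d ∣ m) :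
    #((range m).filter (fun n => ¬ d ∣ n)) = m - m / d := by
  obtain ⟨k, rfl⟩ := hdm
  have h1 := card_multiples d k hd
  have h2 := Finset.card_filter_add_card_filter_not (s := range (d*k)) (p := (d ∣ ·))
  rw [card_range] at h2
  have h3 : d * k / d = k := Nat.mul_div_cancel_left k hd
  have h4 : (filter (fun a => ¬(fun x => d ∣ x) a) (range (d * k))) =
      (filter (fun n => ¬ d ∣ n) (range (d * k))) := rfl
  omega

lemma crt_count (m : ℕ → ℕ) (C : ℕ → ℕ → Prop) [∀ i n, Decidable (C i n)] :
    ∀ (T : Finset ℕ), (∀ i ∈ T, 0 < m i) → (∀ i ∈ T, ∀ n, C i n ↔ C i (n % m i)) →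
    ((T : Set ℕ).Pairwise fun i j => Nat.Coprime (m i) (m j)) →
    #((Finset.range (∏ i ∈ T, m i)).filter fun n => ∀ i ∈ T, C i n)
      = ∏ i ∈ T, #((Finset.range (m i)).filter fun n => C i n) := by
  intro T
  induction T using Finset.induction_on with
  | empty => simp
  | @insert a s ha IH =>
    intro hpos hper hcop
    have hposa : 0 < m a := hpos a (mem_insert_self a s)
    have hposs : ∀ i ∈ s, 0 < m i := fun i hi => hpos i (mem_insert_of_mem hi)
    have hpers : ∀ i ∈ s, ∀ n, C i n ↔ C i (n % m i) := fun i hi => hper i (mem_insert_of_mem hi)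
    have hcops : (s : Set ℕ).Pairwise fun i j => Nat.Coprime (m i) (m j) :=
      hcop.mono (by intro x hx; simp only [coe_insert, Set.mem_insert_iff]; exact Or.inr hx)
    set B := ∏ i ∈ s, m i with hB
    have hBpos : 0 < B := Finset.prod_pos hposs
    have hcoAB : Nat.Coprime (m a) B := by
      apply Nat.Coprime.prod_right
      intro i hi
      exact hcop (mem_insert_self a s) (mem_insert_of_mem hi) (fun h => ha (h ▸ hi))
    have hmidvd : ∀ i ∈ s, m i ∣ B := fun i hi => Finset.dvd_prod_of_mem m hi
    have hLpos : 0 < m a * B := Nat.mul_pos hposa hBpos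
    have hcrt : ∀ r t : ℕ, r < m a → t < B →
        ((Nat.chineseRemainder hcoAB r t : ℕ) % (m a * B)) % m a = r ∧
        ((Nat.chineseRemainder hcoAB r t : ℕ) % (m a * B)) % B = t := by
      intro r t hr ht
      have h1 : (Nat.chineseRemainder hcoAB r t : ℕ) ≡ r [MOD m a] :=
        (Nat.chineseRemainder hcoAB r t).2.1
      have h2 : (Nat.chineseRemainder hcoAB r t : ℕ) ≡ t [MOD B] :=
        (Nat.chineseRemainder hcoAB r t).2.2
      unfold Nat.ModEq at h1 h2
      constructor
      · rw [Nat.mod_mod_of_dvd _ (dvd_mul_right _ _), h1, Nat.mod_eq_of_lt hr]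
      · rw [Nat.mod_mod_of_dvd _ (dvd_mul_left _ _), h2, Nat.mod_eq_of_lt ht]
    rw [Finset.prod_insert ha, Finset.prod_insert ha]
    have key : #((Finset.range (m a * B)).filter fun n => ∀ i ∈ insert a s, C i n)
        = #(((range (m a)) ×ˢ (range B)).filter fun x => C a x.1 ∧ ∀ i ∈ s, C i x.2) := by
      apply Finset.card_bij' (fun n _ => (n % m a, n % B))
        (fun x _ => (Nat.chineseRemainder hcoAB x.1 x.2 : ℕ) % (m a * B))
      · intro n hn
        simp only [mem_filter, mem_range, forall_mem_insert] at hn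
        obtain ⟨hlt, hCa, hCs⟩ := hn
        simp only [mem_filter, Finset.mem_product, mem_range]
        refine ⟨⟨Nat.mod_lt _ hposa, Nat.mod_lt _ hBpos⟩,
          (hper a (mem_insert_self a s) n).mp hCa, ?_⟩
        intro i hi
        have h1 : n % B % m i = n % m i := Nat.mod_mod_of_dvd n (hmidvd i hi)
        rw [hpers i hi (n % B), h1, ← hpers i hi n]
        exact hCs i hi
      · intro x hx
        simp only [mem_filter, Finset.mem_product, mem_range] at hx
        obtain ⟨⟨hx1, hx2⟩, hCa, hCs⟩ := hx
        obtain ⟨e1, e2⟩ := hcrt x.1 x.2 hx1 hx2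
        simp only [mem_filter, mem_range, forall_mem_insert]
        refine ⟨Nat.mod_lt _ hLpos, ?_, ?_⟩
        · rw [hper a (mem_insert_self a s), e1]; exact hCa
        · intro i hi
          rw [hpers i hi, ← Nat.mod_mod_of_dvd _ (hmidvd i hi), e2, ← hpers i hi]
          exact hCs i hi
      · intro n hn
        simp only [mem_filter, mem_range] at hn
        have h1 : (Nat.chineseRemainder hcoAB (n % m a) (n % B) : ℕ) ≡ n [MOD m a] :=
          (Nat.chineseRemainder hcoAB _ _).2.1.trans (Nat.mod_modEq n (m a))
        have h2 : (Nat.chineseRemainder hcoAB (n % m a) (n % B) : ℕ) ≡ n [MOD B] :=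
          (Nat.chineseRemainder hcoAB _ _).2.2.trans (Nat.mod_modEq n B)
        have h3 := (Nat.modEq_and_modEq_iff_modEq_mul hcoAB).mp ⟨h1, h2⟩
        unfold Nat.ModEq at h3
        simpa [h3] using Nat.mod_eq_of_lt hn.1
      · intro x hx
        simp only [mem_filter, Finset.mem_product, mem_range] at hx
        obtain ⟨e1, e2⟩ := hcrt x.1 x.2 hx.1.1 hx.1.2
        rw [Prod.ext_iff]
        exact ⟨e1, e2⟩
    rw [key, Finset.filter_product (fun n => C a n) (fun n => ∀ i ∈ s, C i n),
      Finset.card_product, IH hposs hpers hcops]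

lemma window_count (M : ℕ) (P : ℕ → Prop) [DecidablePred P]
    (hper : ∀ n, P n ↔ P (n % M)) (k : ℕ) :
    #((Ico (k*M) ((k+1)*M)).filter P) = #((range M).filter P) := by
  apply Finset.card_bij' (fun n _ => n - k*M) (fun r _ => r + k*M)
  · intro n hn
    simp only [mem_filter, mem_Ico, mem_range] at hn ⊢
    obtain ⟨⟨h1, h2⟩, hP⟩ := hn
    constructor
    · have : (k+1)*M = k*M + M := by ring
      omega
    · have hn' : n = (n - k*M) + k*M := by omega
      rw [hper n, hn', Nat.add_mul_mod_self_right, ← hper] at hP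
      exact hP
  · intro r hr
    simp only [mem_filter, mem_range, mem_Ico] at hr ⊢
    obtain ⟨h1, hP⟩ := hr
    have hkM : (k+1)*M = k*M + M := by ring
    refine ⟨⟨by omega, by omega⟩, ?_⟩
    rw [hper, Nat.add_mul_mod_self_right, ← hper]
    exact hP
  · intro n hn
    simp only [mem_filter, mem_Ico] at hn
    omega
  · intro r _
    omega

lemma blocks_count (M : ℕ) (P : ℕ → Prop) [DecidablePred P]
    (hper : ∀ n, P n ↔ P (n % M)) (q : ℕ) :
    #((range (q*M)).filter P) = q * #((range M).filter P) := by
  induction q with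
  | zero => simp
  | succ q IH =>
    have hsplit : range ((q+1)*M) = Ico 0 (q*M) ∪ Ico (q*M) ((q+1)*M) := by
      rw [Finset.Ico_union_Ico_eq_Ico (Nat.zero_le _)
        (Nat.mul_le_mul_right M (Nat.le_succ q))]
      rw [Finset.range_eq_Ico]
    rw [hsplit, Finset.filter_union, Finset.card_union_of_disjoint
      (Finset.disjoint_filter_filter (Finset.Ico_disjoint_Ico_consecutive 0 (q*M) ((q+1)*M))),
      ← Finset.range_eq_Ico, IH, window_count M P hper q]
    ring

lemma count_lower (M : ℕ) (P : ℕ → Prop) [DecidablePred P]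
    (hper : ∀ n, P n ↔ P (n % M)) (N : ℕ) :
    (N / M) * #((range M).filter P) ≤ #((Icc 1 N).filter P) + 1 := by
  have h1 : range (N / M * M) ⊆ range (N + 1) := by
    apply Finset.range_subset_range.mpr
    have := Nat.div_mul_le_self N M
    omega
  have h2 : range (N+1) = insert 0 (Icc 1 N) := by
    ext n
    simp only [mem_range, mem_insert, mem_Icc]
    omega
  calc (N / M) * #((range M).filter P) = #((range (N / M * M)).filter P) :=
        (blocks_count M P hper (N / M)).symm
    _ ≤ #((range (N+1)).filter P) := Finset.card_le_card (Finset.filter_subset_filter P h1)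
    _ ≤ #((Icc 1 N).filter P) + 1 := by
        rw [h2, Finset.filter_insert]
        split
        · exact Nat.le_trans (Finset.card_insert_le _ _) (by omega)
        · omega

lemma nat_lt_div_succ_mul (N M : ℕ) (hM : 0 < M) : N < (N / M + 1) * M := by
  have h := Nat.div_add_mod N M
  have h2 : N % M < M := Nat.mod_lt N hM
  calc N = M * (N / M) + N % M := h.symm
    _ < M * (N / M) + M := by omega
    _ = (N / M + 1) * M := by ring

lemma count_upper (M : ℕ) (hM : 0 < M) (P : ℕ → Prop) [DecidablePred P]
    (hper : ∀ n, P n ↔ P (n % M)) (N : ℕ) :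
    #((Icc 1 N).filter P) ≤ (N / M + 1) * #((range M).filter P) := by
  have h1 : Icc 1 N ⊆ range ((N / M + 1) * M) := by
    intro n hn
    simp only [mem_Icc] at hn
    simp only [mem_range]
    exact lt_of_le_of_lt hn.2 (nat_lt_div_succ_mul N M hM)
  calc #((Icc 1 N).filter P) ≤ #((range ((N / M + 1) * M)).filter P) :=
        Finset.card_le_card (Finset.filter_subset_filter P h1)
    _ = (N / M + 1) * #((range M).filter P) := blocks_count M P hper _

lemma cnt_eq_card (A : Set ℕ) [DecidablePred (· ∈ A)] (N : ℕ) :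
    cnt A N = #((Finset.Icc 1 N).filter (fun n => n ∈ A)) := by
  rw [cnt, ← Set.ncard_coe_finset]
  congr 1
  ext n
  simp only [Finset.coe_filter, Finset.mem_Icc, Set.mem_inter_iff, Set.mem_setOf_eq,
    Set.mem_Icc]
  tauto

lemma hasProd_inv_real {ι : Type*} {f : ι → ℝ} {a : ℝ} (h : HasProd f a) (ha : a ≠ 0) :
    HasProd (fun i => (f i)⁻¹) a⁻¹ := by
  have := (h.inv₀ ha)
  apply this.congr
  intro s
  rfl

noncomputable def zeta2Hom : ℕ →*₀ ℝ where
  toFun n := ((n:ℝ)^2)⁻¹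
  map_zero' := by simp
  map_one' := by simp
  map_mul' a b := by push_cast; rw [mul_pow, mul_inv]

@[simp] lemma zeta2Hom_apply (n : ℕ) : zeta2Hom n = ((n:ℝ)^2)⁻¹ := rfl

end Counting

set_option maxHeartbeats 2000000 in
theorem quantitative_bound
    (ν : ArithmeticFunction ℂ) (hν : ν.IsMultiplicative)
    (hdens : ∃ d : ℝ, 0 < d ∧ HasDensity {n : ℕ | ν n ≠ 0} d)
    (f g : ArithmeticFunction ℂ) (hfm : f.IsMultiplicative) (hgm : g.IsMultiplicative)
    (hg : g = f * ν)
    (dg : ℝ) (hdg : HasDensity {n : ℕ | g n ≠ 0} dg) :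
    dg ≥ (6 / Real.pi ^ 2 *
        ∏' p : {p : ℕ // p.Prime ∧ ν p = 0}, (1 + 1 / ((p : ℕ) : ℝ))⁻¹) /
      ∑' n : {n : ℕ | f n ≠ 0}, (1 : ℝ) / (n : ℕ) := by
  classical
  have hg0 : ∀ N : ℕ, (0:ℝ) ≤ (cnt {n : ℕ | g n ≠ 0} N : ℝ) / N := by
    intro N; positivity
  have hdg0 : 0 ≤ dg := ge_of_tendsto hdg (Filter.Eventually.of_forall hg0)
  by_cases hS : Summable (fun n : {n : ℕ | f n ≠ 0} => (1 : ℝ) / (n : ℕ))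
  swap
  · rw [tsum_eq_zero_of_not_summable hS, div_zero]
    exact hdg0
  obtain ⟨d, hd, hD⟩ := hdens
  set S := ∑' n : {n : ℕ | f n ≠ 0}, (1 : ℝ) / (n : ℕ) with hSdef
  set Sν : Set ℕ := {p | p.Prime ∧ ν p = 0} with hSnu
  set Sf : Set ℕ := {p | p.Prime ∧ f p ≠ 0} with hSfdef
  set SB : Set ℕ := {p | p.Prime ∧ (ν p = 0 ∨ f p ≠ 0)} with hSBdef
  set q : ℕ → ℕ := fun p => if p ∈ SB then p else p^2 with hqdef
  set gl : ℕ → ℝ := fun p => Real.log (1 + 1/(p:ℝ)) with hgldef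
  have hglnn : ∀ p : ℕ, 0 ≤ gl p := by
    intro p
    apply Real.log_nonneg
    have : (0:ℝ) ≤ 1/(p:ℝ) := by positivity
    linarith
  have hglle : ∀ p : ℕ, gl p ≤ 1/(p:ℝ) := by
    intro p
    have h := Real.log_le_sub_one_of_pos (x := 1 + 1/(p:ℝ)) (by positivity)
    calc gl p = Real.log (1 + 1/(p:ℝ)) := rfl
      _ ≤ (1 + 1/(p:ℝ)) - 1 := h
      _ = 1/(p:ℝ) := by ring
  -- Part I : density of supp ν forces thinness of Sν
  have hsub_ν : Summable (Set.indicator Sν (fun p : ℕ => 1/(p:ℝ))) := by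
    have claim : ∀ T : Finset ℕ, (∀ p ∈ T, p ∈ Sν) → ∑ p ∈ T, 1/(p:ℝ) ≤ 2 * Real.log d⁻¹ := by
      intro T hT
      have hTp : ∀ p ∈ T, Nat.Prime p := fun p hp => (hT p hp).1
      have hTpos : ∀ p ∈ T, 0 < p := fun p hp => (hTp p hp).pos
      have hT2 : ∀ p ∈ T, 2 ≤ p := fun p hp => (hTp p hp).two_le
      have hTcop : (↑T : Set ℕ).Pairwise fun i j => Nat.Coprime (i^2) (j^2) := by
        intro a ha b hb hab
        exact ((Nat.coprime_primes (hTp a ha) (hTp b hb)).mpr hab).pow 2 2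
      set M := ∏ p ∈ T, p^2 with hM
      set c := ∏ p ∈ T, (p^2 - p + 1) with hc
      have hMpos : 0 < M := Finset.prod_pos (fun p hp => pow_pos (hTpos p hp) 2)
      have hper : ∀ n, (∀ p ∈ T, (p ∣ n → p^2 ∣ n)) ↔ (∀ p ∈ T, (p ∣ n % M → p^2 ∣ n % M)) := by
        intro n
        apply forall₂_congr
        intro p hp
        have hd2 : p^2 ∣ M := Finset.dvd_prod_of_mem _ hp
        have hd1 : p ∣ M := dvd_trans (dvd_pow_self p two_ne_zero) hd2
        exact imp_congr (Nat.dvd_mod_iff hd1).symm (Nat.dvd_mod_iff hd2).symm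
      have hres : ∀ p ∈ T, #((range (p^2)).filter fun r => p ∣ r → p^2 ∣ r) = p^2 - p + 1 := by
        intro p hp
        have ppos := hTpos p hp
        have hfeq : (range (p^2)).filter (fun r => p ∣ r → p^2 ∣ r)
            = insert 0 ((range (p^2)).filter (fun r => ¬ p ∣ r)) := by
          ext r
          simp only [mem_filter, mem_range, mem_insert]
          constructor
          · rintro ⟨hr, himp⟩
            by_cases hpr : p ∣ r
            · exact Or.inl (Nat.eq_zero_of_dvd_of_lt (himp hpr) hr)
            · exact Or.inr ⟨hr, hpr⟩
          · rintro (rfl | ⟨hr, hpr⟩)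
            · exact ⟨pow_pos ppos 2, fun _ => dvd_zero _⟩
            · exact ⟨hr, fun h => absurd h hpr⟩
        rw [hfeq, Finset.card_insert_of_notMem (by simp),
          card_non_multiples p (p^2) ppos (dvd_pow_self p two_ne_zero)]
        have h1 : p^2 / p = p := by rw [pow_two]; exact Nat.mul_div_cancel_left p ppos
        have h2 : p ≤ p^2 := Nat.le_self_pow two_ne_zero p
        omega
      have hcount : #((range M).filter fun n => ∀ p ∈ T, (p ∣ n → p^2 ∣ n)) = c := by
        rw [crt_count (fun p => p^2) (fun p n => p ∣ n → p^2 ∣ n) T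
          (fun p hp => pow_pos (hTpos p hp) 2)
          (by
            intro p hp n
            exact imp_congr (Nat.dvd_mod_iff (dvd_pow_self p two_ne_zero)).symm
              (Nat.dvd_mod_iff dvd_rfl).symm) hTcop]
        exact Finset.prod_congr rfl hres
      have hsupp : ∀ N, cnt {n : ℕ | ν n ≠ 0} N
          ≤ #((Icc 1 N).filter fun n => ∀ p ∈ T, (p ∣ n → p^2 ∣ n)) := by
        intro N
        rw [cnt_eq_card]
        apply Finset.card_le_card
        intro n hn
        simp only [mem_filter, Set.mem_setOf_eq] at hn ⊢
        refine ⟨hn.1, ?_⟩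
        intro p hp hpdvd
        by_contra hnd
        apply hn.2
        have hpp := hTp p hp
        have hcopm : Nat.Coprime p (n / p) := by
          rw [Nat.Prime.coprime_iff_not_dvd hpp]
          intro hdd
          apply hnd
          have hx : p * p ∣ p * (n / p) := mul_dvd_mul_left p hdd
          rw [Nat.mul_div_cancel' hpdvd] at hx
          rwa [pow_two]
        have hmul : n = p * (n / p) := (Nat.mul_div_cancel' hpdvd).symm
        rw [hmul, hν.map_mul_of_coprime hcopm, (hT p hp).2, zero_mul]
      have hub : ∀ N, cnt {n : ℕ | ν n ≠ 0} N ≤ (N / M + 1) * c := by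
        intro N
        calc cnt {n : ℕ | ν n ≠ 0} N ≤ _ := hsupp N
          _ ≤ (N / M + 1) * #((range M).filter fun n => ∀ p ∈ T, (p ∣ n → p^2 ∣ n)) :=
            count_upper M hMpos _ hper N
          _ = (N / M + 1) * c := by rw [hcount]
      have hdle : d ≤ (c:ℝ)/(M:ℝ) := by
        have htend : Tendsto (fun N : ℕ => (c:ℝ)/M + c/N) atTop (𝓝 ((c:ℝ)/M + 0)) :=
          tendsto_const_nhds.add (tendsto_const_div_atTop_nhds_zero_nat (c:ℝ))
        have hev : (fun N : ℕ => (cnt {n : ℕ | ν n ≠ 0} N : ℝ)/N)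
            ≤ᶠ[atTop] (fun N : ℕ => (c:ℝ)/M + c/N) := by
          filter_upwards [eventually_ge_atTop 1] with N hN
          have hN0 : (0:ℝ) < N := by exact_mod_cast hN
          have h1 : (cnt {n : ℕ | ν n ≠ 0} N : ℝ) ≤ ((N / M + 1 : ℕ):ℝ) * c := by
            exact_mod_cast hub N
          have hM0 : (0:ℝ) < M := by exact_mod_cast hMpos
          calc (cnt {n : ℕ | ν n ≠ 0} N : ℝ)/N ≤ (((N / M + 1 : ℕ):ℝ) * c)/N :=
                (div_le_div_iff_of_pos_right hN0).mpr h1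
            _ ≤ (((N:ℝ)/M + 1) * c)/N := by
                apply (div_le_div_iff_of_pos_right hN0).mpr
                apply mul_le_mul_of_nonneg_right _ (by positivity)
                push_cast
                have hcast := Nat.cast_div_le (m := N) (n := M) (α := ℝ)
                linarith
            _ = (c:ℝ)/M + c/N := by field_simp
        have hfin := le_of_tendsto_of_tendsto hD htend hev
        simpa using hfin
      have hfact : ∀ p ∈ T, ((p^2 - p + 1 : ℕ) : ℝ) = (p:ℝ)^2 - (p:ℝ) + 1 := by
        intro p hp
        have h2 : p ≤ p^2 := Nat.le_self_pow two_ne_zero p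
        push_cast [h2]
        ring
      have hcM : (c:ℝ)/(M:ℝ) = ∏ p ∈ T, (((p:ℝ)^2 - (p:ℝ) + 1)/(p:ℝ)^2) := by
        rw [Finset.prod_div_distrib]
        congr 1
        · rw [hc, Nat.cast_prod]
          exact Finset.prod_congr rfl hfact
        · rw [hM, Nat.cast_prod]
          push_cast
          rfl
      have hfacle : ∀ p ∈ T, ((p:ℝ)^2 - (p:ℝ) + 1)/(p:ℝ)^2 ≤ Real.exp (-(1/(2*(p:ℝ)))) := by
        intro p hp
        have h2 : (2:ℝ) ≤ (p:ℝ) := by exact_mod_cast hT2 p hp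
        have hp0 : (0:ℝ) < p := by linarith
        have key : ((p:ℝ)^2 - (p:ℝ) + 1)/(p:ℝ)^2 ≤ 1 - 1/(2*(p:ℝ)) := by
          rw [div_le_iff₀ (by positivity)]
          have hexpand : (1 - 1/(2*(p:ℝ))) * (p:ℝ)^2 = (p:ℝ)^2 - p/2 := by
            field_simp
          rw [hexpand]
          nlinarith
        have key2 : 1 - 1/(2*(p:ℝ)) ≤ Real.exp (-(1/(2*(p:ℝ)))) := by
          have := Real.add_one_le_exp (-(1/(2*(p:ℝ))))
          linarith
        linarith
      have hprodle : (c:ℝ)/M ≤ Real.exp (-(∑ p ∈ T, 1/(2*(p:ℝ)))) := by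
        rw [hcM]
        calc ∏ p ∈ T, (((p:ℝ)^2 - (p:ℝ) + 1)/(p:ℝ)^2)
            ≤ ∏ p ∈ T, Real.exp (-(1/(2*(p:ℝ)))) := by
              apply Finset.prod_le_prod _ hfacle
              intro p hp
              have h2 : (2:ℝ) ≤ (p:ℝ) := by exact_mod_cast hT2 p hp
              have h3 : (0:ℝ) < (p:ℝ)^2 - (p:ℝ) + 1 := by nlinarith
              positivity
          _ = Real.exp (∑ p ∈ T, -(1/(2*(p:ℝ)))) := (Real.exp_sum _ _).symm
          _ = Real.exp (-(∑ p ∈ T, 1/(2*(p:ℝ)))) := by rw [Finset.sum_neg_distrib]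
      have hsum2 : ∑ p ∈ T, 1/(2*(p:ℝ)) ≤ Real.log d⁻¹ := by
        have h1 : d ≤ Real.exp (-(∑ p ∈ T, 1/(2*(p:ℝ)))) := le_trans hdle hprodle
        rw [Real.log_inv]
        have h3 : Real.log d ≤ -(∑ p ∈ T, 1/(2*(p:ℝ))) := by
          calc Real.log d ≤ Real.log (Real.exp (-(∑ p ∈ T, 1/(2*(p:ℝ))))) :=
                Real.log_le_log hd h1
            _ = _ := Real.log_exp _
        linarith
      calc ∑ p ∈ T, 1/(p:ℝ) = 2 * ∑ p ∈ T, 1/(2*(p:ℝ)) := by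
            rw [Finset.mul_sum]
            apply Finset.sum_congr rfl
            intro p hp
            have h2 : (2:ℝ) ≤ (p:ℝ) := by exact_mod_cast hT2 p hp
            have hp0 : (0:ℝ) < p := by linarith
            field_simp
        _ ≤ 2 * Real.log d⁻¹ := by linarith [hsum2]
    apply summable_of_sum_le
    · intro p
      exact Set.indicator_nonneg (fun x _ => by positivity) p
    · intro u
      have heq : ∑ p ∈ u, Set.indicator Sν (fun p : ℕ => 1/(p:ℝ)) p
          = ∑ p ∈ u.filter (· ∈ Sν), 1/(p:ℝ) := by
        rw [Finset.sum_filter]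
        apply Finset.sum_congr rfl
        intro p _
        by_cases hp : p ∈ Sν
        · rw [Set.indicator_of_mem hp, if_pos hp]
        · rw [Set.indicator_of_notMem hp, if_neg hp]
      rw [heq]
      exact claim _ (fun p hp => (Finset.mem_filter.mp hp).2)
  -- Part II : thinness of Sf
  have hsupp_ind : Summable (Set.indicator {n : ℕ | f n ≠ 0} (fun n : ℕ => 1/(n:ℝ))) := by
    exact summable_subtype_iff_indicator.mp hS
  have hsub_f : Summable (Set.indicator Sf (fun p : ℕ => 1/(p:ℝ))) := by
    apply Summable.of_nonneg_of_le _ _ hsupp_ind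
    · intro p
      exact Set.indicator_nonneg (fun x _ => by positivity) p
    · intro p
      by_cases hp : p ∈ Sf
      · rw [Set.indicator_of_mem hp, Set.indicator_of_mem (by exact hp.2)]
      · rw [Set.indicator_of_notMem hp]
        exact Set.indicator_nonneg (fun x _ => by positivity) p
  have hsub_B : Summable (Set.indicator SB (fun p : ℕ => 1/(p:ℝ))) := by
    apply Summable.of_nonneg_of_le _ _ (hsub_ν.add hsub_f)
    · intro p
      exact Set.indicator_nonneg (fun x _ => by positivity) p
    · intro p
      by_cases hp : p ∈ SB
      · rw [Set.indicator_of_mem hp]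
        rcases hp.2 with h | h
        · have h1 : p ∈ Sν := ⟨hp.1, h⟩
          have h2 : (0:ℝ) ≤ Set.indicator Sf (fun p : ℕ => 1/(p:ℝ)) p :=
            Set.indicator_nonneg (fun x _ => by positivity) p
          rw [Set.indicator_of_mem h1]
          linarith
        · have h1 : p ∈ Sf := ⟨hp.1, h⟩
          have h2 : (0:ℝ) ≤ Set.indicator Sν (fun p : ℕ => 1/(p:ℝ)) p :=
            Set.indicator_nonneg (fun x _ => by positivity) p
          rw [Set.indicator_of_mem h1]
          linarith
      · rw [Set.indicator_of_notMem hp]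
        have h2 : (0:ℝ) ≤ Set.indicator Sν (fun p : ℕ => 1/(p:ℝ)) p :=
          Set.indicator_nonneg (fun x _ => by positivity) p
        have h3 : (0:ℝ) ≤ Set.indicator Sf (fun p : ℕ => 1/(p:ℝ)) p :=
          Set.indicator_nonneg (fun x _ => by positivity) p
        linarith
  -- log summability
  have hcompare : ∀ s : Set ℕ, Summable (Set.indicator s (fun p : ℕ => 1/(p:ℝ))) →
      Summable (Set.indicator s gl) := by
    intro s hs
    apply Summable.of_nonneg_of_le _ _ hs
    · intro p
      exact Set.indicator_nonneg (fun x _ => hglnn x) p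
    · intro p
      by_cases hp : p ∈ s
      · rw [Set.indicator_of_mem hp, Set.indicator_of_mem hp]
        exact hglle p
      · rw [Set.indicator_of_notMem hp, Set.indicator_of_notMem hp]
  have hsumglν : Summable (Set.indicator Sν gl) := hcompare _ hsub_ν
  have hsumglf : Summable (Set.indicator Sf gl) := hcompare _ hsub_f
  have hsumglB : Summable (Set.indicator SB gl) := hcompare _ hsub_B
  set Lν := ∑' p : ↥Sν, gl ↑p with hLν
  set Lf := ∑' p : ↥Sf, gl ↑p with hLf
  set LB := ∑' p : ↥SB, gl ↑p with hLB
  have hLB_le : LB ≤ Lν + Lf := by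
    rw [hLν, hLf, hLB, _root_.tsum_subtype, _root_.tsum_subtype, _root_.tsum_subtype, ← Summable.tsum_add hsumglν hsumglf]
    apply Summable.tsum_le_tsum _ hsumglB (hsumglν.add hsumglf)
    intro p
    by_cases hp : p ∈ SB
    · rw [Set.indicator_of_mem hp]
      rcases hp.2 with h | h
      · have h1 : p ∈ Sν := ⟨hp.1, h⟩
        have h2 : (0:ℝ) ≤ Set.indicator Sf gl p := Set.indicator_nonneg (fun x _ => hglnn x) p
        rw [Set.indicator_of_mem h1]
        linarith
      · have h1 : p ∈ Sf := ⟨hp.1, h⟩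
        have h2 : (0:ℝ) ≤ Set.indicator Sν gl p := Set.indicator_nonneg (fun x _ => hglnn x) p
        rw [Set.indicator_of_mem h1]
        linarith
    · rw [Set.indicator_of_notMem hp]
      have h2 : (0:ℝ) ≤ Set.indicator Sν gl p := Set.indicator_nonneg (fun x _ => hglnn x) p
      have h3 : (0:ℝ) ≤ Set.indicator Sf gl p := Set.indicator_nonneg (fun x _ => hglnn x) p
      linarith
  -- exp products
  have hexpprod : ∀ s : Set ℕ, Summable (Set.indicator s gl) →
      HasProd (fun p : ↥s => (1 + 1/((p:ℕ):ℝ))⁻¹) (Real.exp (-(∑' p : ↥s, gl ↑p))) := by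
    intro s hsum
    have hsum' : Summable (fun p : ↥s => gl ↑p) := summable_subtype_iff_indicator.mpr hsum
    have h1 : HasSum (fun p : ↥s => -gl ↑p) (-(∑' p : ↥s, gl ↑p)) := hsum'.hasSum.neg
    have h2 := HasSum.exp h1
    rw [← Real.exp_eq_exp_ℝ] at h2
    have h3 : (Real.exp ∘ fun p : ↥s => -gl ↑p) = fun p : ↥s => (1 + 1/((p:ℕ):ℝ))⁻¹ := by
      funext p
      rw [Function.comp_apply, Real.exp_neg, hgldef, Real.exp_log (by positivity)]
    rwa [h3] at h2
  have hexpprodf : HasProd (fun p : ↥Sf => (1 + 1/((p:ℕ):ℝ))) (Real.exp Lf) := by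
    have hsum' : Summable (fun p : ↥Sf => gl ↑p) := summable_subtype_iff_indicator.mpr hsumglf
    have h2 := HasSum.exp hsum'.hasSum
    rw [← Real.exp_eq_exp_ℝ] at h2
    have h3 : (Real.exp ∘ fun p : ↥Sf => gl ↑p) = fun p : ↥Sf => (1 + 1/((p:ℕ):ℝ)) := by
      funext p
      rw [Function.comp_apply, hgldef, Real.exp_log (by positivity)]
    rw [h3] at h2
    exact h2
  have hProdν : HasProd (fun p : {p : ℕ // p.Prime ∧ ν p = 0} => (1 + 1/((p:ℕ):ℝ))⁻¹)
      (Real.exp (-Lν)) := hexpprod Sν hsumglν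
  have hProdB : HasProd (fun p : ↥SB => (1 + 1/((p:ℕ):ℝ))⁻¹) (Real.exp (-LB)) :=
    hexpprod SB hsumglB
  have hSlow : Real.exp Lf ≤ S := by
    have claimC : ∀ T : Finset ℕ, (∀ p ∈ T, p ∈ Sf) → ∏ p ∈ T, (1 + 1/(p:ℝ)) ≤ S := by
      intro T hT
      have hTp : ∀ p ∈ T, Nat.Prime p := fun p hp => (hT p hp).1
      have h1 : ∏ p ∈ T, (1 + 1/(p:ℝ)) = ∑ t ∈ T.powerset, ∏ p ∈ t, 1/(p:ℝ) := by
        have := Finset.prod_add (fun p : ℕ => 1/(p:ℝ)) (fun _ : ℕ => (1:ℝ)) T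
        simp only [Finset.prod_const_one, mul_one] at this
        rw [← this]
        apply Finset.prod_congr rfl
        intro p _
        ring
      have hinj : ∀ t1 ∈ T.powerset, ∀ t2 ∈ T.powerset,
          (∏ p ∈ t1, p) = (∏ p ∈ t2, p) → t1 = t2 := by
        intro t1 ht1 t2 ht2 he
        have e1 : (∏ p ∈ t1, p).primeFactors = t1 :=
          Nat.primeFactors_prod (fun p hp => hTp p (Finset.mem_powerset.mp ht1 hp))
        have e2 : (∏ p ∈ t2, p).primeFactors = t2 :=
          Nat.primeFactors_prod (fun p hp => hTp p (Finset.mem_powerset.mp ht2 hp))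
        rw [← e1, he, e2]
      have h2 : ∀ t ∈ T.powerset, (∏ p ∈ t, p) ∈ {n : ℕ | f n ≠ 0} := by
        intro t ht
        have hsub := Finset.mem_powerset.mp ht
        have hcop : (↑t : Set ℕ).Pairwise (Function.onFun Nat.Coprime (_root_.id : ℕ → ℕ)) := by
          intro a ha b hb hab
          simp only [Function.onFun, id_eq]
          exact (Nat.coprime_primes (hTp a (hsub ha)) (hTp b (hsub hb))).mpr hab
        have : f (∏ p ∈ t, p) = ∏ p ∈ t, f p := hfm.map_prod _root_.id t hcop
        simp only [Set.mem_setOf_eq, this, Finset.prod_ne_zero_iff]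
        intro p hp
        exact (hT p (hsub hp)).2
      have hS' : S = ∑' n : ℕ, Set.indicator {n : ℕ | f n ≠ 0} (fun n : ℕ => 1/(n:ℝ)) n := by
        rw [hSdef, ← _root_.tsum_subtype]
      have h3 : ∑ t ∈ T.powerset, ∏ p ∈ t, 1/(p:ℝ)
          = ∑ n ∈ T.powerset.image (fun t => ∏ p ∈ t, p), 1/(n:ℝ) := by
        rw [Finset.sum_image hinj]
        apply Finset.sum_congr rfl
        intro t _
        rw [Nat.cast_prod]
        rw [Finset.prod_div_distrib]
        simp
      rw [h1, h3]
      calc ∑ n ∈ T.powerset.image (fun t => ∏ p ∈ t, p), 1/(n:ℝ)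
          = ∑ n ∈ T.powerset.image (fun t => ∏ p ∈ t, p),
              Set.indicator {n : ℕ | f n ≠ 0} (fun n : ℕ => 1/(n:ℝ)) n := by
            apply Finset.sum_congr rfl
            intro n hn
            obtain ⟨t, ht, rfl⟩ := Finset.mem_image.mp hn
            rw [Set.indicator_of_mem (h2 t ht)]
        _ ≤ ∑' n : ℕ, Set.indicator {n : ℕ | f n ≠ 0} (fun n : ℕ => 1/(n:ℝ)) n := by
            apply Summable.sum_le_tsum
            · intro i _
              exact Set.indicator_nonneg (fun x _ => by positivity) i
            · exact hsupp_ind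
        _ = S := hS'.symm
    apply le_of_tendsto' hexpprodf
    intro u
    have himg : ∏ p ∈ u, (1 + 1/((p:ℕ):ℝ)) = ∏ p ∈ u.image Subtype.val, (1 + 1/(p:ℝ)) := by
      rw [Finset.prod_image (by intro x _ y _ h; exact Subtype.ext h)]
    rw [himg]
    apply claimC
    intro p hp
    obtain ⟨x, hx, rfl⟩ := Finset.mem_image.mp hp
    exact x.2
  have hSpos : 0 < S := lt_of_lt_of_le (Real.exp_pos Lf) hSlow
  -- Part VIII : support of g contains sieved numbers
  have hAg : ∀ n : ℕ, 1 ≤ n → (∀ p : ℕ, p.Prime → ¬ q p ∣ n) → g n ≠ 0 := by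
    intro n hn1 hqn
    have hsq : Squarefree n := by
      rw [Nat.squarefree_iff_prime_squarefree]
      intro p hp hdvd
      apply hqn p hp
      by_cases hmem : p ∈ SB
      · rw [hqdef]; simp only [if_pos hmem]
        exact dvd_trans (dvd_mul_right p p) hdvd
      · rw [hqdef]; simp only [if_neg hmem]
        rw [pow_two]; exact hdvd
    have hprod : ∏ p ∈ n.primeFactors, p = n := Nat.prod_primeFactors_of_squarefree hsq
    have hcop : (↑n.primeFactors : Set ℕ).Pairwise (Function.onFun Nat.Coprime (_root_.id : ℕ → ℕ)) := by
      intro a ha b hb hab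
      simp only [Function.onFun, id_eq]
      exact (Nat.coprime_primes (Nat.prime_of_mem_primeFactors ha)
        (Nat.prime_of_mem_primeFactors hb)).mpr hab
    have hgn : g n = ∏ p ∈ n.primeFactors, g p := by
      conv_lhs => rw [← hprod]
      exact hgm.map_prod _root_.id n.primeFactors hcop
    rw [hgn, Finset.prod_ne_zero_iff]
    intro p hp
    have hpp : p.Prime := Nat.prime_of_mem_primeFactors hp
    have hpdvd : p ∣ n := Nat.dvd_of_mem_primeFactors hp
    have hnB : p ∉ SB := by
      intro hmem
      apply hqn p hpp
      rw [hqdef]; simp only [if_pos hmem]; exact hpdvd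
    have hfp : f p = 0 ∧ ν p ≠ 0 := by
      rw [hSBdef] at hnB
      simp only [Set.mem_setOf_eq] at hnB
      push_neg at hnB
      have := hnB hpp
      tauto
    have hgp : g p = ν p := by
      rw [hg, ArithmeticFunction.mul_apply,
        Nat.sum_divisorsAntidiagonal (f := fun a b => f a * ν b), hpp.divisors,
        Finset.sum_insert (by simp only [Finset.mem_singleton]; exact fun h => hpp.ne_one h.symm)]
      simp [hfm.map_one, hν.map_one, hfp.1, Nat.div_one, Nat.div_self hpp.pos]
    rw [hgp]; exact hfp.2
  have hsieve : 6/Real.pi^2 * Real.exp (-LB) ≤ dg := by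
    set u : ℕ → ℝ := fun n => Set.indicator SB (fun p : ℕ => 1/(p:ℝ)) n + 1/(n:ℝ)^2 with hu
    have hsq2 : Summable (fun n : ℕ => 1/(n:ℝ)^2) :=
      Real.summable_one_div_nat_pow.mpr one_lt_two
    have husum : Summable u := by
      simp only [hu]
      exact hsub_B.add hsq2
    have hunn : ∀ n, 0 ≤ u n := by
      intro n
      simp only [hu]
      have h1 : (0:ℝ) ≤ Set.indicator SB (fun p : ℕ => 1/(p:ℝ)) n :=
        Set.indicator_nonneg (fun x _ => by positivity) n
      have h2 : (0:ℝ) ≤ 1/(n:ℝ)^2 := by positivity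
      linarith
    set tail : ℕ → ℝ := fun z => ∑' k, u (k + z) with htail
    have htail0 : Tendsto tail atTop (𝓝 0) := tendsto_sum_nat_add u
    have htailnn : ∀ z, 0 ≤ tail z := fun z => tsum_nonneg (fun k => hunn _)
    set V : ℕ → ℝ := Set.mulIndicator {p : ℕ | p.Prime} (fun p => 1 - 1/(p:ℝ)^2) with hV
    set W : ℕ → ℝ := Set.mulIndicator SB (fun p => (1 + 1/(p:ℝ))⁻¹) with hW
    have hq_dvd : ∀ p : ℕ, p.Prime → q p ∣ p^2 := by
      intro p hp
      simp only [hqdef]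
      by_cases hmem : p ∈ SB
      · simp only [if_pos hmem]; exact dvd_pow_self p two_ne_zero
      · simp only [if_neg hmem]
        exact dvd_rfl
    have hq_pos : ∀ p : ℕ, p.Prime → 0 < q p := by
      intro p hp
      simp only [hqdef]
      by_cases hmem : p ∈ SB
      · simp only [if_pos hmem]; exact hp.pos
      · simp only [if_neg hmem]; exact pow_pos hp.pos 2
    have huq : ∀ p : ℕ, p.Prime → 1/(q p : ℝ) ≤ u p := by
      intro p hpp
      simp only [hu, hqdef]
      by_cases hmem : p ∈ SB
      · simp only [if_pos hmem, Set.indicator_of_mem hmem]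
        have h2 : (0:ℝ) ≤ 1/(p:ℝ)^2 := by positivity
        linarith
      · simp only [if_neg hmem, Set.indicator_of_notMem hmem]
        push_cast
        rw [zero_add]
    have hz : ∀ z : ℕ, (∏ p ∈ range z, V p) * (∏ p ∈ range z, W p) - tail z ≤ dg := by
      intro z
      set T := z.primesBelow with hT
      have hTp : ∀ p ∈ T, Nat.Prime p := fun p hp => (Nat.mem_primesBelow.mp hp).2
      have hTpos : ∀ p ∈ T, 0 < p := fun p hp => (hTp p hp).pos
      set M := ∏ p ∈ T, p^2 with hM
      set c := ∏ p ∈ T, (p^2 - p^2 / q p) with hc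
      have hMpos : 0 < M := Finset.prod_pos (fun p hp => pow_pos (hTpos p hp) 2)
      have hTcop : (↑T : Set ℕ).Pairwise fun i j => Nat.Coprime (i^2) (j^2) := by
        intro a ha b hb hab
        exact ((Nat.coprime_primes (hTp a ha) (hTp b hb)).mpr hab).pow 2 2
      set P : ℕ → Prop := fun n => ∀ p ∈ T, ¬ q p ∣ n with hPdef
      have hper : ∀ n, P n ↔ P (n % M) := by
        intro n
        simp only [hPdef]
        apply forall₂_congr
        intro p hp
        have hd : q p ∣ M := dvd_trans (hq_dvd p (hTp p hp)) (Finset.dvd_prod_of_mem _ hp)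
        exact (not_congr (Nat.dvd_mod_iff hd)).symm
      have hres : ∀ p ∈ T, #((range (p^2)).filter fun n => ¬ q p ∣ n) = p^2 - p^2 / q p :=
        fun p hp => card_non_multiples (q p) (p^2) (hq_pos p (hTp p hp)) (hq_dvd p (hTp p hp))
      have hcount : #((range M).filter P) = c := by
        simp only [hPdef, hM]
        rw [crt_count (fun p => p^2) (fun p n => ¬ q p ∣ n) T
          (fun p hp => pow_pos (hTpos p hp) 2)
          (by
            intro p hp n
            exact (not_congr (Nat.dvd_mod_iff (hq_dvd p (hTp p hp)))).symm) hTcop]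
        exact Finset.prod_congr rfl hres
      have hnat : ∀ N : ℕ, (N / M) * c
          ≤ cnt {n : ℕ | g n ≠ 0} N + (∑ p ∈ (Icc z N).filter Nat.Prime, N / q p) + 1 := by
        intro N
        have hlow := count_lower M P hper N
        rw [hcount] at hlow
        have hsubset : (Icc 1 N).filter P ⊆
            ((Icc 1 N).filter (fun n => n ∈ {n : ℕ | g n ≠ 0})) ∪
            ((Icc z N).filter Nat.Prime).biUnion (fun p => (Icc 1 N).filter (q p ∣ ·)) := by
          intro n hn
          simp only [mem_filter, mem_Icc, hPdef] at hn
          obtain ⟨⟨hn1, hnN⟩, hPn⟩ := hn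
          by_cases hall : ∀ p : ℕ, p.Prime → ¬ q p ∣ n
          · apply Finset.mem_union_left
            simp only [mem_filter, mem_Icc, Set.mem_setOf_eq]
            exact ⟨⟨hn1, hnN⟩, hAg n hn1 hall⟩
          · apply Finset.mem_union_right
            push_neg at hall
            obtain ⟨p, hpp, hpd⟩ := hall
            have hpT : p ∉ T := fun hmem => hPn p hmem hpd
            have hpz : z ≤ p := by
              by_contra hlt
              exact hpT (Nat.mem_primesBelow.mpr ⟨by omega, hpp⟩)
            have hqn : q p ≤ n := Nat.le_of_dvd (by omega) hpd
            have hpq : p ≤ q p := by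
              simp only [hqdef]
              by_cases hmem : p ∈ SB
              · simp only [if_pos hmem]; exact le_rfl
              · simp only [if_neg hmem]
                exact Nat.le_self_pow two_ne_zero p
            apply Finset.mem_biUnion.mpr
            refine ⟨p, ?_, ?_⟩
            · simp only [mem_filter, mem_Icc]
              exact ⟨⟨hpz, by omega⟩, hpp⟩
            · simp only [mem_filter, mem_Icc]
              exact ⟨⟨hn1, hnN⟩, hpd⟩
        have hIoc : Finset.Icc 1 N = Finset.Ioc 0 N := by
          ext n
          simp only [mem_Icc, mem_Ioc]
          omega
        have hcard : #((Icc 1 N).filter P)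
            ≤ cnt {n : ℕ | g n ≠ 0} N + ∑ p ∈ (Icc z N).filter Nat.Prime, N / q p := by
          calc #((Icc 1 N).filter P) ≤ _ := Finset.card_le_card hsubset
            _ ≤ #((Icc 1 N).filter (fun n => n ∈ {n : ℕ | g n ≠ 0}))
                + #(((Icc z N).filter Nat.Prime).biUnion
                    (fun p => (Icc 1 N).filter (q p ∣ ·))) :=
              Finset.card_union_le _ _
            _ ≤ cnt {n : ℕ | g n ≠ 0} N + ∑ p ∈ (Icc z N).filter Nat.Prime, N / q p := by
              apply Nat.add_le_add
              · exact le_of_eq (cnt_eq_card _ N).symm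
              · calc #(((Icc z N).filter Nat.Prime).biUnion
                      (fun p => (Icc 1 N).filter (q p ∣ ·)))
                    ≤ ∑ p ∈ (Icc z N).filter Nat.Prime, #((Icc 1 N).filter (q p ∣ ·)) :=
                      Finset.card_biUnion_le
                  _ = ∑ p ∈ (Icc z N).filter Nat.Prime, N / q p := by
                      apply Finset.sum_congr rfl
                      intro p _
                      rw [hIoc]
                      exact Nat.Ioc_filter_dvd_card_eq_div N (q p)
        omega
      have hNineq : ∀ N : ℕ, 1 ≤ N →
          (c:ℝ)/M - ((c:ℝ)+1)/N - tail z ≤ (cnt {n : ℕ | g n ≠ 0} N : ℝ)/N := by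
        intro N hN
        have hN0 : (0:ℝ) < N := by exact_mod_cast hN
        have hM0 : (0:ℝ) < M := by exact_mod_cast hMpos
        have hc0 : (0:ℝ) ≤ (c:ℝ) := by positivity
        have herr : (∑ p ∈ (Icc z N).filter Nat.Prime, ((N / q p : ℕ) : ℝ)) ≤ (N:ℝ) * tail z := by
          have hstep1 : ∀ p ∈ (Icc z N).filter Nat.Prime, ((N / q p : ℕ):ℝ) ≤ (N:ℝ) * u p := by
            intro p hp
            simp only [mem_filter, mem_Icc] at hp
            have hpp := hp.2
            have hqp := hq_pos p hpp
            calc ((N / q p : ℕ) : ℝ) ≤ (N:ℝ) / (q p : ℝ) := Nat.cast_div_le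
              _ = (N:ℝ) * (1/(q p : ℝ)) := by ring
              _ ≤ (N:ℝ) * u p := mul_le_mul_of_nonneg_left (huq p hpp) (by positivity)
          have hstep2 : ∑ p ∈ (Icc z N).filter Nat.Prime, (N:ℝ) * u p ≤ (N:ℝ) * tail z := by
            rw [← Finset.mul_sum]
            apply mul_le_mul_of_nonneg_left _ (le_of_lt hN0)
            calc ∑ p ∈ (Icc z N).filter Nat.Prime, u p ≤ ∑ n ∈ Icc z N, u n :=
                  Finset.sum_le_sum_of_subset_of_nonneg (Finset.filter_subset _ _)
                    (fun n _ _ => hunn n)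
              _ = ∑ k ∈ (Icc z N).image (fun n => n - z), u (k + z) := by
                  rw [Finset.sum_image (by
                    intro a ha b hb hab
                    simp only [Finset.mem_coe, mem_Icc] at ha hb hab
                    omega)]
                  apply Finset.sum_congr rfl
                  intro n hn
                  simp only [mem_Icc] at hn
                  congr 1
                  omega
              _ ≤ tail z := by
                  simp only [htail]
                  apply Summable.sum_le_tsum
                  · intro k _
                    exact hunn _
                  · exact (summable_nat_add_iff z).mpr husum
          exact le_trans (Finset.sum_le_sum hstep1) hstep2
        have h1' : ((N / M : ℕ):ℝ) * (c:ℝ) ≤ (cnt {n : ℕ | g n ≠ 0} N : ℝ)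
            + (∑ p ∈ (Icc z N).filter Nat.Prime, ((N / q p : ℕ):ℝ)) + 1 := by
          exact_mod_cast hnat N
        have h2 : (N:ℝ)/M - 1 ≤ ((N / M : ℕ):ℝ) := by
          have hlt := nat_lt_div_succ_mul N M hMpos
          have hcast : (N:ℝ) < (((N/M : ℕ):ℝ) + 1) * (M:ℝ) := by exact_mod_cast hlt
          have hdiv : (N:ℝ)/M < ((N/M : ℕ):ℝ) + 1 := (div_lt_iff₀ hM0).mpr hcast
          linarith
        have h3 : ((N:ℝ)/M - 1) * c ≤ ((N / M : ℕ):ℝ) * c := mul_le_mul_of_nonneg_right h2 hc0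
        have h5 : ((c:ℝ)/M - ((c:ℝ)+1)/N - tail z) * N ≤ (cnt {n : ℕ | g n ≠ 0} N : ℝ) := by
          have hexpand : ((c:ℝ)/M - ((c:ℝ)+1)/N - tail z) * N
              = (N:ℝ)/M*c - ((c:ℝ)+1) - (N:ℝ)*tail z := by
            field_simp
          rw [hexpand]
          nlinarith [h1', herr, h3]
        calc (c:ℝ)/M - ((c:ℝ)+1)/N - tail z
            = (((c:ℝ)/M - ((c:ℝ)+1)/N - tail z) * N)/N :=
              (mul_div_cancel_right₀ _ (ne_of_gt hN0)).symm
          _ ≤ (cnt {n : ℕ | g n ≠ 0} N : ℝ)/N := (div_le_div_iff_of_pos_right hN0).mpr h5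
      have htendN : Tendsto (fun N : ℕ => (c:ℝ)/M - ((c:ℝ)+1)/N - tail z) atTop
          (𝓝 ((c:ℝ)/M - 0 - tail z)) :=
        (tendsto_const_nhds.sub (tendsto_const_div_atTop_nhds_zero_nat _)).sub tendsto_const_nhds
      have hzle : (c:ℝ)/M - tail z ≤ dg := by
        have hfin := le_of_tendsto_of_tendsto htendN hdg (by
          filter_upwards [eventually_ge_atTop 1] with N hN
          exact hNineq N hN)
        simpa using hfin
      have hfq : ∀ p ∈ T, ((p^2 - p^2 / q p : ℕ):ℝ) = (1 - 1/(q p : ℝ)) * (p:ℝ)^2 := by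
        intro p hp
        have hpp := hTp p hp
        have hqd := hq_dvd p hpp
        have hqp := hq_pos p hpp
        have hle : p^2 / q p ≤ p^2 := Nat.div_le_self _ _
        have hq0 : (q p : ℝ) ≠ 0 := by exact_mod_cast hqp.ne'
        have hcast : ((p^2 / q p : ℕ):ℝ) = ((p^2 : ℕ):ℝ) / (q p : ℝ) := Nat.cast_div hqd hq0
        rw [Nat.cast_sub hle, hcast]
        push_cast
        field_simp
      have hceq : (c:ℝ) = ∏ p ∈ T, ((1 - 1/(q p : ℝ)) * (p:ℝ)^2) := by
        rw [hc, Nat.cast_prod]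
        exact Finset.prod_congr rfl hfq
      have hMeq : (M:ℝ) = ∏ p ∈ T, ((p:ℝ)^2) := by
        rw [hM, Nat.cast_prod]
        push_cast
        rfl
      have hMne : (∏ p ∈ T, ((p:ℝ)^2)) ≠ 0 := by
        apply Finset.prod_ne_zero_iff.mpr
        intro p hp
        have := hTpos p hp
        positivity
      have hstep : (c:ℝ)/(M:ℝ) = ∏ p ∈ T, (1 - 1/(q p : ℝ)) := by
        rw [hceq, hMeq, Finset.prod_mul_distrib]
        field_simp
      have hTfilter : T = (range z).filter Nat.Prime := by
        ext p
        simp only [hT, Nat.mem_primesBelow, mem_filter, mem_range]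
      have hcM : (c:ℝ)/(M:ℝ) = (∏ p ∈ range z, V p) * (∏ p ∈ range z, W p) := by
        rw [hstep, hTfilter, Finset.prod_filter, ← Finset.prod_mul_distrib]
        apply Finset.prod_congr rfl
        intro p _
        by_cases hpp : Nat.Prime p
        · rw [if_pos hpp]
          have hVp : V p = 1 - 1/(p:ℝ)^2 := by
            simp only [hV]
            exact Set.mulIndicator_of_mem hpp _
          by_cases hmem : p ∈ SB
          · have hWp : W p = (1 + 1/(p:ℝ))⁻¹ := by
              simp only [hW]
              exact Set.mulIndicator_of_mem hmem _
            rw [hVp, hWp]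
            simp only [hqdef, if_pos hmem]
            have h2 : (2:ℝ) ≤ (p:ℝ) := by exact_mod_cast hpp.two_le
            have hp0 : (0:ℝ) < p := by linarith
            have hne1 : (1:ℝ) + 1/(p:ℝ) ≠ 0 := by positivity
            field_simp
            ring
          · have hWp : W p = 1 := by
              simp only [hW]
              exact Set.mulIndicator_of_notMem hmem _
            rw [hVp, hWp]
            simp only [hqdef, if_neg hmem]
            push_cast
            ring
        · rw [if_neg hpp]
          have hVp : V p = 1 := by
            simp only [hV]
            exact Set.mulIndicator_of_notMem hpp _
          have hWp : W p = 1 := by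
            simp only [hW]
            exact Set.mulIndicator_of_notMem (fun hmem => hpp hmem.1) _
          rw [hVp, hWp]
          ring
      rw [← hcM]
      exact hzle
    have hVprod : HasProd V (6/Real.pi^2) := by
      have hsζ : Summable (fun n : ℕ => ‖zeta2Hom n‖) := by
        apply hsq2.congr
        intro n
        simp only [zeta2Hom_apply, Real.norm_eq_abs]
        rw [abs_of_nonneg (by positivity), one_div]
      have h1 := EulerProduct.eulerProduct_completely_multiplicative_hasProd (f := zeta2Hom) hsζ
      have htsum : ∑' n : ℕ, zeta2Hom n = Real.pi^2/6 := by
        rw [← hasSum_zeta_two.tsum_eq]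
        apply tsum_congr
        intro n
        simp only [zeta2Hom_apply, one_div]
      rw [htsum] at h1
      have hπ0 : (0:ℝ) < Real.pi := Real.pi_pos
      have hne : (Real.pi^2/6 : ℝ) ≠ 0 := by positivity
      have h2 := hasProd_inv_real h1 hne
      have h3 : (fun p : Nat.Primes => ((1 - zeta2Hom ↑p)⁻¹)⁻¹)
          = fun p : Nat.Primes => (fun m : ℕ => 1 - 1/(m:ℝ)^2) ↑p := by
        funext p
        rw [inv_inv]
        simp only [zeta2Hom_apply, one_div]
      rw [h3, inv_div] at h2
      simp only [hV]
      exact hasProd_subtype_iff_mulIndicator.mp h2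
    have hWprod : HasProd W (Real.exp (-LB)) := by
      simp only [hW]
      exact hasProd_subtype_iff_mulIndicator.mp hProdB
    have hlim : Tendsto (fun z => (∏ p ∈ range z, V p) * (∏ p ∈ range z, W p) - tail z)
        atTop (𝓝 (6/Real.pi^2 * Real.exp (-LB) - 0)) :=
      (hVprod.tendsto_prod_nat.mul hWprod.tendsto_prod_nat).sub htail0
    have hfin := le_of_tendsto hlim (Filter.Eventually.of_forall hz)
    simpa using hfin
  -- conclusion
  have htpν : (∏' p : {p : ℕ // p.Prime ∧ ν p = 0}, (1 + 1 / ((p : ℕ) : ℝ))⁻¹)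
      = Real.exp (-Lν) := hProdν.tprod_eq
  rw [ge_iff_le, htpν]
  have hπ : (0:ℝ) < 6/Real.pi^2 := by positivity
  calc 6/Real.pi^2 * Real.exp (-Lν) / S ≤ 6/Real.pi^2 * Real.exp (-Lν) / Real.exp Lf := by
        apply div_le_div_of_nonneg_left _ (Real.exp_pos Lf) hSlow
        positivity
    _ = 6/Real.pi^2 * Real.exp (-Lν - Lf) := by
        rw [Real.exp_sub, mul_div_assoc]
    _ ≤ 6/Real.pi^2 * Real.exp (-LB) := by
        apply mul_le_mul_of_nonneg_left _ (le_of_lt hπ)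
        apply Real.exp_le_exp.mpr
        linarith
    _ ≤ dg := hsieve
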